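/- (Determinant Sylvester identity) Let R be a commutative ring, A an n×n matrix over R, and 1 ≤ s < t ≤ n. Let A^{(s)}_t be the (t-s+1)×(t-s+1) matrix whose (i,j) entry (for s ≤ i,j ≤ t) is the determinant of the s×s submatrix obtained by bordering the upper-left (s-1)×(s-1) block of A with row i and column j. Then det(A^{(s)}_t) = δ_{s-1}^{t-s} · δ_t, where δ_k denotes the determinant of the upper-left k×k block of A. -/

import Mathlib

open Matrix

/-- `borderedMinor A k i j` is the determinant of the `k × k` submatrix of `A`
obtained by bordering the upper-left `(k-1) × (k-1)` block of `A` with row `i`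
and column `j` (when `k ≤ n`, the indices `p % n` coincide with `p`). -/
def borderedMinor {R : Type*} [CommRing R] {n : ℕ} (A : Matrix (Fin n) (Fin n) R)
    (k : ℕ) (i j : Fin n) : R :=
  (Matrix.of fun p q : Fin k =>
    A (if (p : ℕ) < k - 1 then ⟨p % n, Nat.mod_lt _ i.pos⟩ else i)
      (if (q : ℕ) < k - 1 then ⟨q % n, Nat.mod_lt _ j.pos⟩ else j)).det

/-- `cornerMinor A k hk = δ_k`, the determinant of the upper-left `k × k` block of `A`. -/
def cornerMinor {R : Type*} [CommRing R] {n : ℕ} (A : Matrix (Fin n) (Fin n) R)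
    (k : ℕ) (hk : k ≤ n) : R :=
  (A.submatrix (Fin.castLE hk) (Fin.castLE hk)).det

/-- determinant Sylvester identity:
`det (a^s_{i,j})_{i,j=s..t} = δ_{s-1}^{t-s} * δ_t` for `1 ≤ s < t ≤ n`
(indices written `1`-based as in the paper; below they are `0`-based, so the
rows and columns of `A^{(s)}_t` are `s-1, …, t-1`). -/
theorem borderedMinor_map {R S : Type*} [CommRing R] [CommRing S] {n : ℕ} (f : R →+* S)
    (A : Matrix (Fin n) (Fin n) R) (k : ℕ) (i j : Fin n) :
    f (borderedMinor A k i j) = borderedMinor (A.map f) k i j := by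
  unfold borderedMinor
  rw [RingHom.map_det]
  rfl

theorem cornerMinor_map {R S : Type*} [CommRing R] [CommRing S] {n : ℕ} (f : R →+* S)
    (A : Matrix (Fin n) (Fin n) R) (k : ℕ) (hk : k ≤ n) :
    f (cornerMinor A k hk) = cornerMinor (A.map f) k hk := by
  unfold cornerMinor
  rw [RingHom.map_det]
  rfl

theorem syl_aux_lt {n s t : ℕ} (hs : 1 ≤ s) (hst : s < t) (ht : t ≤ n) (i : Fin (t - s + 1)) :
    s - 1 + (i : ℕ) < n := by
  have := i.isLt; omega

theorem syl_aux_le {n s t : ℕ} (hst : s < t) (ht : t ≤ n) : s - 1 ≤ n := by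
  omega

set_option maxHeartbeats 1600000 in
theorem sylvester_identity_field {K : Type*} [Field K] {n s t : ℕ}
    (A : Matrix (Fin n) (Fin n) K) (hs : 1 ≤ s) (hst : s < t) (ht : t ≤ n)
    (hB : cornerMinor A (s - 1) (syl_aux_le hst ht) ≠ 0) :
    (Matrix.of fun i j : Fin (t - s + 1) =>
        borderedMinor A s ⟨s - 1 + i, syl_aux_lt hs hst ht i⟩
          ⟨s - 1 + j, syl_aux_lt hs hst ht j⟩).det
      = cornerMinor A (s - 1) (syl_aux_le hst ht) ^ (t - s) * cornerMinor A t ht := by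
  have hm1 : s - 1 ≤ n := by omega
  set B : Matrix (Fin (s - 1)) (Fin (s - 1)) K :=
    A.submatrix (Fin.castLE hm1) (Fin.castLE hm1) with hBdef
  have hBdet : B.det ≠ 0 := hB
  haveI : Invertible B := B.invertibleOfIsUnitDet (isUnit_iff_ne_zero.mpr hBdet)
  set C : Matrix (Fin (s - 1)) (Fin (t - s + 1)) K :=
    Matrix.of (fun p q => A (Fin.castLE hm1 p) ⟨s - 1 + q, syl_aux_lt hs hst ht q⟩) with hCdef
  set D : Matrix (Fin (t - s + 1)) (Fin (s - 1)) K :=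
    Matrix.of (fun p q => A ⟨s - 1 + p, syl_aux_lt hs hst ht p⟩ (Fin.castLE hm1 q)) with hDdef
  set E : Matrix (Fin (t - s + 1)) (Fin (t - s + 1)) K :=
    Matrix.of (fun p q => A ⟨s - 1 + p, syl_aux_lt hs hst ht p⟩
      ⟨s - 1 + q, syl_aux_lt hs hst ht q⟩) with hEdef
  -- the corner t determinant as a block determinant
  have hcorner : cornerMinor A t ht = B.det * (E - D * ⅟B * C).det := by
    let e₂ : (Fin (s - 1) ⊕ Fin (t - s + 1)) ≃ Fin t :=
      finSumFinEquiv.trans (finCongr (by omega))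
    have hsub : (A.submatrix (Fin.castLE ht) (Fin.castLE ht)).submatrix e₂ e₂
        = fromBlocks B C D E := by
      ext u v
      rcases u with u | u <;> rcases v with v | v <;>
        · simp only [submatrix_apply, Equiv.trans_apply, finSumFinEquiv_apply_left,
            finSumFinEquiv_apply_right, finCongr_apply, fromBlocks_apply₁₁,
            fromBlocks_apply₁₂, fromBlocks_apply₂₁, fromBlocks_apply₂₂, hBdef, hCdef, hDdef, hEdef,
            Matrix.of_apply]
          congr 1 <;> apply Fin.ext <;> simp [e₂]
    calc cornerMinor A t ht
        = ((A.submatrix (Fin.castLE ht) (Fin.castLE ht)).submatrix e₂ e₂).det := by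
          rw [det_submatrix_equiv_self]; rfl
      _ = (fromBlocks B C D E).det := by rw [hsub]
      _ = B.det * (E - D * ⅟B * C).det := det_fromBlocks₁₁ _ _ _ _
  -- each bordered minor is det B times a Schur complement entry
  have hbord : ∀ i j : Fin (t - s + 1),
      borderedMinor A s ⟨s - 1 + i, syl_aux_lt hs hst ht i⟩
          ⟨s - 1 + j, syl_aux_lt hs hst ht j⟩
        = B.det * (E - D * ⅟B * C) i j := by
    intro i j
    set x : Fin n := ⟨s - 1 + i, syl_aux_lt hs hst ht i⟩ with hx
    set y : Fin n := ⟨s - 1 + j, syl_aux_lt hs hst ht j⟩ with hy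
    set c : Matrix (Fin (s - 1)) (Fin 1) K := Matrix.of (fun p _ => A (Fin.castLE hm1 p) y)
      with hcdef
    set r : Matrix (Fin 1) (Fin (s - 1)) K := Matrix.of (fun _ q => A x (Fin.castLE hm1 q))
      with hrdef
    set a : Matrix (Fin 1) (Fin 1) K := Matrix.of (fun _ _ => A x y) with hadef
    let e₁ : (Fin (s - 1) ⊕ Fin 1) ≃ Fin s := finSumFinEquiv.trans (finCongr (by omega))
    have hsub : (Matrix.of fun p q : Fin s =>
        A (if (p : ℕ) < s - 1 then ⟨p % n, Nat.mod_lt _ x.pos⟩ else x)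
          (if (q : ℕ) < s - 1 then ⟨q % n, Nat.mod_lt _ y.pos⟩ else y)).submatrix e₁ e₁
        = fromBlocks B c r a := by
      ext u v
      have key : ∀ w : Fin (s - 1) ⊕ Fin 1,
          (if ((e₁ w : Fin s) : ℕ) < s - 1 then
              (⟨(e₁ w : Fin s) % n, Nat.mod_lt _ x.pos⟩ : Fin n)
            else x)
          = Sum.elim (fun p : Fin (s - 1) => Fin.castLE hm1 p) (fun _ => x) w := by
        rintro (w | w)
        · have h1 : ((e₁ (Sum.inl w) : Fin s) : ℕ) = (w : ℕ) := by simp [e₁]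
          rw [if_pos (h1 ▸ w.isLt)]
          apply Fin.ext
          simp [h1, Nat.mod_eq_of_lt (lt_of_lt_of_le w.isLt hm1)]
        · have h1 : ((e₁ (Sum.inr w) : Fin s) : ℕ) = s - 1 + (w : ℕ) := by simp [e₁]
          rw [if_neg (by omega)]
          rfl
      have key' : ∀ w : Fin (s - 1) ⊕ Fin 1,
          (if ((e₁ w : Fin s) : ℕ) < s - 1 then
              (⟨(e₁ w : Fin s) % n, Nat.mod_lt _ y.pos⟩ : Fin n)
            else y)
          = Sum.elim (fun p : Fin (s - 1) => Fin.castLE hm1 p) (fun _ => y) w := by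
        rintro (w | w)
        · have h1 : ((e₁ (Sum.inl w) : Fin s) : ℕ) = (w : ℕ) := by simp [e₁]
          rw [if_pos (h1 ▸ w.isLt)]
          apply Fin.ext
          simp [h1, Nat.mod_eq_of_lt (lt_of_lt_of_le w.isLt hm1)]
        · have h1 : ((e₁ (Sum.inr w) : Fin s) : ℕ) = s - 1 + (w : ℕ) := by simp [e₁]
          rw [if_neg (by omega)]
          rfl
      rw [submatrix_apply, Matrix.of_apply, key u, key' v]
      rcases u with u | u <;> rcases v with v | v <;> rfl
    have hdet : borderedMinor A s x y = (fromBlocks B c r a).det := by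
      rw [← hsub, det_submatrix_equiv_self]
      rfl
    rw [hdet, det_fromBlocks₁₁]
    congr 1
    generalize ⅟B = M
    rw [det_fin_one]
    simp only [Matrix.sub_apply, mul_apply, Fin.sum_univ_one]
    rfl
  -- the matrix of bordered minors
  have hN : (Matrix.of fun i j : Fin (t - s + 1) =>
        borderedMinor A s ⟨s - 1 + i, syl_aux_lt hs hst ht i⟩
          ⟨s - 1 + j, syl_aux_lt hs hst ht j⟩)
      = B.det • (E - D * ⅟B * C) := by
    ext i j
    rw [Matrix.of_apply, hbord i j, Matrix.smul_apply, smul_eq_mul]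
  rw [hN, det_smul, Fintype.card_fin, hcorner]
  have hBcorner : cornerMinor A (s - 1) (syl_aux_le hst ht) = B.det := rfl
  rw [hBcorner]
  rw [pow_succ, mul_assoc]

-- auxiliary: pushing the whole identity's sides through a ring hom
theorem syl_lhs_map {R S : Type*} [CommRing R] [CommRing S] {n s t : ℕ} (f : R →+* S)
    (A : Matrix (Fin n) (Fin n) R) (hs : 1 ≤ s) (hst : s < t) (ht : t ≤ n) :
    f ((Matrix.of fun i j : Fin (t - s + 1) =>
        borderedMinor A s ⟨s - 1 + i, syl_aux_lt hs hst ht i⟩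
          ⟨s - 1 + j, syl_aux_lt hs hst ht j⟩).det)
      = (Matrix.of fun i j : Fin (t - s + 1) =>
        borderedMinor (A.map f) s ⟨s - 1 + i, syl_aux_lt hs hst ht i⟩
          ⟨s - 1 + j, syl_aux_lt hs hst ht j⟩).det := by
  rw [RingHom.map_det]
  congr 1
  ext i j
  simp only [RingHom.mapMatrix_apply, Matrix.map_apply, Matrix.of_apply]
  exact borderedMinor_map f A s _ _

theorem sylvester_identity {R : Type*} [CommRing R] {n s t : ℕ}
    (A : Matrix (Fin n) (Fin n) R) (hs : 1 ≤ s) (hst : s < t) (ht : t ≤ n) :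
    (Matrix.of fun i j : Fin (t - s + 1) =>
        borderedMinor A s ⟨s - 1 + i, by have := i.isLt; omega⟩
          ⟨s - 1 + j, by have := j.isLt; omega⟩).det
      = cornerMinor A (s - 1) (by omega) ^ (t - s) * cornerMinor A t ht := by
  set P := MvPolynomial (Fin n × Fin n) ℤ with hP
  set G : Matrix (Fin n) (Fin n) P := Matrix.of fun i j => MvPolynomial.X (i, j) with hG
  -- the identity for the generic matrix
  have key : (Matrix.of fun i j : Fin (t - s + 1) =>
        borderedMinor G s ⟨s - 1 + i, by have := i.isLt; omega⟩
          ⟨s - 1 + j, by have := j.isLt; omega⟩).det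
      = cornerMinor G (s - 1) (by omega) ^ (t - s) * cornerMinor G t ht := by
    set K := FractionRing P with hK
    have hinj : Function.Injective (algebraMap P K) := IsFractionRing.injective P K
    apply hinj
    set f : P →+* K := algebraMap P K with hf
    -- the corner minor of the generic matrix is nonzero
    have hBG : cornerMinor G (s - 1) (by omega : s - 1 ≤ n) ≠ 0 := by
      intro h
      have := congrArg (MvPolynomial.eval (fun p : Fin n × Fin n =>
        if p.1 = p.2 then (1 : ℤ) else 0)) h
      rw [_root_.map_zero] at this
      rw [show MvPolynomial.eval (fun p : Fin n × Fin n => if p.1 = p.2 then (1 : ℤ) else 0)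
            (cornerMinor G (s - 1) (by omega : s - 1 ≤ n))
          = cornerMinor (G.map (MvPolynomial.eval (fun p : Fin n × Fin n =>
              if p.1 = p.2 then (1 : ℤ) else 0))) (s - 1) (by omega : s - 1 ≤ n)
        from cornerMinor_map _ G _ _] at this
      have hone : G.map (MvPolynomial.eval (fun p : Fin n × Fin n =>
          if p.1 = p.2 then (1 : ℤ) else 0)) = (1 : Matrix (Fin n) (Fin n) ℤ) := by
        ext i j
        simp [hG, Matrix.one_apply]
      rw [hone] at this
      have : (1 : ℤ) = 0 := by
        rw [← this]
        unfold cornerMinor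
        rw [show (1 : Matrix (Fin n) (Fin n) ℤ).submatrix (Fin.castLE (by omega : s - 1 ≤ n))
              (Fin.castLE (by omega : s - 1 ≤ n)) = 1 by
          ext i j; simp [Matrix.one_apply, Fin.castLE_inj, eq_comm]]
        simp
      exact one_ne_zero this
    have hBGK : cornerMinor (G.map f) (s - 1) (by omega : s - 1 ≤ n) ≠ 0 := by
      rw [← cornerMinor_map f G (s - 1) (by omega : s - 1 ≤ n)]
      intro h
      exact hBG (hinj (by rw [h, _root_.map_zero]))
    have hfield := sylvester_identity_field (G.map f) hs hst ht hBGK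
    rw [syl_lhs_map f G hs hst ht, hfield, _root_.map_mul, _root_.map_pow,
      cornerMinor_map f G (s - 1) (by omega : s - 1 ≤ n), cornerMinor_map f G t ht]
  -- specialize to A
  set φ : P →+* R := (MvPolynomial.eval₂Hom (Int.castRingHom R)
    (fun p : Fin n × Fin n => A p.1 p.2)) with hφ
  have hGA : G.map φ = A := by
    ext i j
    show φ (MvPolynomial.X (i, j)) = A i j
    rw [hφ]
    exact MvPolynomial.eval₂Hom_X' (Int.castRingHom R) (fun p : Fin n × Fin n => A p.1 p.2) (i, j)
  have := congrArg φ key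
  rw [syl_lhs_map φ G hs hst ht, _root_.map_mul, _root_.map_pow,
    cornerMinor_map φ G (s - 1) (by omega : s - 1 ≤ n), cornerMinor_map φ G t ht, hGA] at this
  exact this
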